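/- Let K ≠ 2^[m] be a simplicial complex on [m] with m ≥ 4. If the 1-skeleton of Bier(K) is a chordal graph, then either K has no 2-element faces or K^∨ has no 2-element faces. -/

import Mathlib

open Finset

/-- A (finite abstract) simplicial complex on the vertex type `α`:
a set of finite subsets containing `∅` and closed under taking subsets. -/
def IsSimplicialComplex {α : Type*} (K : Set (Finset α)) : Prop :=
  ∅ ∈ K ∧ ∀ σ ∈ K, ∀ τ ⊆ σ, τ ∈ K

/-- The Alexander dual of `K` on `[m]`: `J ∈ K^∨` iff `[m] \ J ∉ K`. -/
def dualK {m : ℕ} (K : Set (Finset (Fin m))) : Set (Finset (Fin m)) :=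
  {J | Finset.univ \ J ∉ K}

/-- The Bier sphere of `K`: the deleted join of `K` and its Alexander dual,
on the vertex set `[m] ⊔ [m']` (encoded as `Fin m ⊕ Fin m`, `inl` = unprimed,
`inr` = primed). -/
def bier {m : ℕ} (K : Set (Finset (Fin m))) : Set (Finset (Fin m ⊕ Fin m)) :=
  {S | ∃ I J : Finset (Fin m), I ∈ K ∧ J ∈ dualK K ∧ Disjoint I J ∧
    S = I.map Function.Embedding.inl ∪ J.map Function.Embedding.inr}

/-- The 1-skeleton graph of a simplicial complex. -/
def skeletonGraph {α : Type*} [DecidableEq α] (L : Set (Finset α)) :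
    SimpleGraph α where
  Adj i j := i ≠ j ∧ ({i, j} : Finset α) ∈ L
  symm := ⟨fun i j h => ⟨h.1.symm, by rw [Finset.pair_comm]; exact h.2⟩⟩
  loopless := ⟨fun i h => h.1 rfl⟩

/-- A simplicial complex is chordal if its 1-skeleton contains no induced
(chordless) cycle of length at least `4`. -/
def ChordalComplex {α : Type*} [DecidableEq α] (L : Set (Finset α)) : Prop :=
  ∀ n : ℕ, 4 ≤ n → ∀ f : ZMod n → α, Function.Injective f →
    ¬ (∀ i j : ZMod n,
        (skeletonGraph L).Adj (f i) (f j) ↔ (j = i + 1 ∨ i = j + 1))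

section lems

variable {m : ℕ} {K : Set (Finset (Fin m))}

lemma skeleton_adj {α : Type*} [DecidableEq α] (L : Set (Finset α)) (a b : α) :
    (skeletonGraph L).Adj a b ↔ a ≠ b ∧ ({a, b} : Finset α) ∈ L := Iff.rfl

lemma dual_down (hK : IsSimplicialComplex K) : ∀ J ∈ dualK K, ∀ J' ⊆ J, J' ∈ dualK K := by
  intro J hJ J' hsub hmem
  exact hJ (hK.2 _ hmem _ (Finset.sdiff_subset_sdiff (le_refl _) hsub))

lemma empty_mem_dual (hKne : Finset.univ ∉ K) : (∅ : Finset (Fin m)) ∈ dualK K := by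
  simp [dualK, hKne]

lemma bier_lr (hK : IsSimplicialComplex K) (x y : Fin m) :
    ({Sum.inl x, Sum.inr y} : Finset (Fin m ⊕ Fin m)) ∈ bier K ↔
      ({x} : Finset (Fin m)) ∈ K ∧ ({y} : Finset (Fin m)) ∈ dualK K ∧ x ≠ y := by
  constructor
  · rintro ⟨I, J, hI, hJ, hdisj, hS⟩
    have hx : x ∈ I := by
      have : (Sum.inl x : Fin m ⊕ Fin m) ∈ I.map Function.Embedding.inl ∪ J.map Function.Embedding.inr := by
        rw [← hS]; simp
      simpa using this
    have hy : y ∈ J := by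
      have : (Sum.inr y : Fin m ⊕ Fin m) ∈ I.map Function.Embedding.inl ∪ J.map Function.Embedding.inr := by
        rw [← hS]; simp
      simpa using this
    refine ⟨hK.2 _ hI _ (by simpa using hx), dual_down hK _ hJ _ (by simpa using hy), ?_⟩
    rintro rfl
    exact (Finset.disjoint_left.mp hdisj hx) hy
  · rintro ⟨h1, h2, hxy⟩
    exact ⟨{x}, {y}, h1, h2, Finset.disjoint_singleton.mpr hxy, by ext z; simp⟩

lemma bier_rl (hK : IsSimplicialComplex K) (x y : Fin m) :
    ({Sum.inr y, Sum.inl x} : Finset (Fin m ⊕ Fin m)) ∈ bier K ↔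
      ({x} : Finset (Fin m)) ∈ K ∧ ({y} : Finset (Fin m)) ∈ dualK K ∧ x ≠ y := by
  rw [Finset.pair_comm]; exact bier_lr hK x y

lemma bier_ll (hK : IsSimplicialComplex K) (hKne : Finset.univ ∉ K) (x y : Fin m) :
    ({Sum.inl x, Sum.inl y} : Finset (Fin m ⊕ Fin m)) ∈ bier K ↔
      ({x, y} : Finset (Fin m)) ∈ K := by
  constructor
  · rintro ⟨I, J, hI, hJ, hdisj, hS⟩
    have hx : x ∈ I := by
      have : (Sum.inl x : Fin m ⊕ Fin m) ∈ I.map Function.Embedding.inl ∪ J.map Function.Embedding.inr := by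
        rw [← hS]; simp
      simpa using this
    have hy : y ∈ I := by
      have : (Sum.inl y : Fin m ⊕ Fin m) ∈ I.map Function.Embedding.inl ∪ J.map Function.Embedding.inr := by
        rw [← hS]; simp
      simpa using this
    exact hK.2 _ hI _ (by simp [Finset.insert_subset_iff, hx, hy])
  · intro h
    exact ⟨{x, y}, ∅, h, empty_mem_dual hKne, by simp, by simp⟩

lemma bier_rr (hK : IsSimplicialComplex K) (x y : Fin m) :
    ({Sum.inr x, Sum.inr y} : Finset (Fin m ⊕ Fin m)) ∈ bier K ↔
      ({x, y} : Finset (Fin m)) ∈ dualK K := by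
  constructor
  · rintro ⟨I, J, hI, hJ, hdisj, hS⟩
    have hx : x ∈ J := by
      have : (Sum.inr x : Fin m ⊕ Fin m) ∈ I.map Function.Embedding.inl ∪ J.map Function.Embedding.inr := by
        rw [← hS]; simp
      simpa using this
    have hy : y ∈ J := by
      have : (Sum.inr y : Fin m ⊕ Fin m) ∈ I.map Function.Embedding.inl ∪ J.map Function.Embedding.inr := by
        rw [← hS]; simp
      simpa using this
    exact dual_down hK _ hJ _ (by simp [Finset.insert_subset_iff, hx, hy])
  · intro h
    exact ⟨∅, {x, y}, hK.1, h, by simp, by simp⟩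

end lems
section cyc
variable {m : ℕ} {K : Set (Finset (Fin m))}

lemma cycle4 (hK : IsSimplicialComplex K) (hKne : Finset.univ ∉ K)
    (i j : Fin m) (hij : i ≠ j)
    (h1 : ({i, j} : Finset (Fin m)) ∈ K) (h2 : ({i, j} : Finset (Fin m)) ∈ dualK K) :
    ¬ ChordalComplex (bier K) := by
  intro hch
  let f : ZMod 4 → Fin m ⊕ Fin m := ![.inl i, .inl j, .inr i, .inr j]
  have e0 : f 0 = .inl i := rfl
  have e1 : f 1 = .inl j := rfl
  have e2 : f 2 = .inr i := rfl
  have e3 : f 3 = .inr j := rfl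
  have hZ : ∀ x : ZMod 4, x = 0 ∨ x = 1 ∨ x = 2 ∨ x = 3 := by decide
  have hsi : ({i} : Finset (Fin m)) ∈ K := hK.2 _ h1 _ (by simp)
  have hsj : ({j} : Finset (Fin m)) ∈ K := hK.2 _ h1 _ (by simp)
  have hdi : ({i} : Finset (Fin m)) ∈ dualK K := dual_down hK _ h2 _ (by simp)
  have hdj : ({j} : Finset (Fin m)) ∈ dualK K := dual_down hK _ h2 _ (by simp)
  have a01 : (skeletonGraph (bier K)).Adj (.inl i) (.inl j) :=
    ⟨by simp [hij], (bier_ll hK hKne i j).mpr h1⟩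
  have a12 : (skeletonGraph (bier K)).Adj (.inl j) (.inr i) :=
    ⟨by simp, (bier_lr hK j i).mpr ⟨hsj, hdi, hij.symm⟩⟩
  have a23 : (skeletonGraph (bier K)).Adj (.inr i) (.inr j) :=
    ⟨by simp [hij], (bier_rr hK i j).mpr h2⟩
  have a30 : (skeletonGraph (bier K)).Adj (.inr j) (.inl i) :=
    ⟨by simp, (bier_rl hK i j).mpr ⟨hsi, hdj, hij⟩⟩
  have na02 : ¬ (skeletonGraph (bier K)).Adj (.inl i) (.inr i) :=
    fun h => ((bier_lr hK i i).mp h.2).2.2 rfl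
  have na13 : ¬ (skeletonGraph (bier K)).Adj (.inl j) (.inr j) :=
    fun h => ((bier_lr hK j j).mp h.2).2.2 rfl
  have hinj : Function.Injective f := by
    intro x y hxy
    rcases hZ x with rfl|rfl|rfl|rfl <;> rcases hZ y with rfl|rfl|rfl|rfl <;>
      simp only [e0, e1, e2, e3] at hxy <;> simp_all
  refine hch 4 (by norm_num) f hinj ?_
  intro x y
  rcases hZ x with rfl|rfl|rfl|rfl <;> rcases hZ y with rfl|rfl|rfl|rfl <;>
    simp only [e0, e1, e2, e3] <;>
    first
      | exact iff_of_false (fun h => h.1 rfl) (by decide)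
      | exact iff_of_true a01 (by decide)
      | exact iff_of_true a01.symm (by decide)
      | exact iff_of_true a12 (by decide)
      | exact iff_of_true a12.symm (by decide)
      | exact iff_of_true a23 (by decide)
      | exact iff_of_true a23.symm (by decide)
      | exact iff_of_true a30 (by decide)
      | exact iff_of_true a30.symm (by decide)
      | exact iff_of_false (fun h => na02 h) (by decide)
      | exact iff_of_false (fun h => na02 h.symm) (by decide)
      | exact iff_of_false (fun h => na13 h) (by decide)
      | exact iff_of_false (fun h => na13 h.symm) (by decide)

lemma cycle5K (hK : IsSimplicialComplex K) (hKne : Finset.univ ∉ K)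
    (i j t : Fin m) (hij : i ≠ j) (hit : i ≠ t) (hjt : j ≠ t)
    (hK1 : ({i, j} : Finset (Fin m)) ∈ K) (ht : ({t} : Finset (Fin m)) ∈ K)
    (hdi : ({i} : Finset (Fin m)) ∈ dualK K) (hdj : ({j} : Finset (Fin m)) ∈ dualK K)
    (hnd : ({i, j} : Finset (Fin m)) ∉ dualK K)
    (hnit : ({i, t} : Finset (Fin m)) ∉ K) (hnjt : ({j, t} : Finset (Fin m)) ∉ K) :
    ¬ ChordalComplex (bier K) := by
  intro hch
  let f : ZMod 5 → Fin m ⊕ Fin m := ![.inr j, .inl i, .inl j, .inr i, .inl t]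
  have e0 : f 0 = .inr j := rfl
  have e1 : f 1 = .inl i := rfl
  have e2 : f 2 = .inl j := rfl
  have e3 : f 3 = .inr i := rfl
  have e4 : f 4 = .inl t := rfl
  have hZ : ∀ x : ZMod 5, x = 0 ∨ x = 1 ∨ x = 2 ∨ x = 3 ∨ x = 4 := by decide
  have hsi : ({i} : Finset (Fin m)) ∈ K := hK.2 _ hK1 _ (by simp)
  have hsj : ({j} : Finset (Fin m)) ∈ K := hK.2 _ hK1 _ (by simp)
  have a01 : (skeletonGraph (bier K)).Adj (.inr j) (.inl i) :=
    ⟨by simp, (bier_rl hK i j).mpr ⟨hsi, hdj, hij⟩⟩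
  have a12 : (skeletonGraph (bier K)).Adj (.inl i) (.inl j) :=
    ⟨by simp [hij], (bier_ll hK hKne i j).mpr hK1⟩
  have a23 : (skeletonGraph (bier K)).Adj (.inl j) (.inr i) :=
    ⟨by simp, (bier_lr hK j i).mpr ⟨hsj, hdi, hij.symm⟩⟩
  have a34 : (skeletonGraph (bier K)).Adj (.inr i) (.inl t) :=
    ⟨by simp, (bier_rl hK t i).mpr ⟨ht, hdi, hit.symm⟩⟩
  have a40 : (skeletonGraph (bier K)).Adj (.inl t) (.inr j) :=
    ⟨by simp, (bier_lr hK t j).mpr ⟨ht, hdj, hjt.symm⟩⟩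
  have na02 : ¬ (skeletonGraph (bier K)).Adj (.inr j) (.inl j) :=
    fun h => ((bier_rl hK j j).mp h.2).2.2 rfl
  have na03 : ¬ (skeletonGraph (bier K)).Adj (.inr j) (.inr i) :=
    fun h => hnd (by have := (bier_rr hK j i).mp h.2; rwa [Finset.pair_comm] at this)
  have na13 : ¬ (skeletonGraph (bier K)).Adj (.inl i) (.inr i) :=
    fun h => ((bier_lr hK i i).mp h.2).2.2 rfl
  have na14 : ¬ (skeletonGraph (bier K)).Adj (.inl i) (.inl t) :=
    fun h => hnit ((bier_ll hK hKne i t).mp h.2)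
  have na24 : ¬ (skeletonGraph (bier K)).Adj (.inl j) (.inl t) :=
    fun h => hnjt ((bier_ll hK hKne j t).mp h.2)
  have hinj : Function.Injective f := by
    intro x y hxy
    rcases hZ x with rfl|rfl|rfl|rfl|rfl <;> rcases hZ y with rfl|rfl|rfl|rfl|rfl <;>
      simp only [e0, e1, e2, e3, e4] at hxy <;> simp_all
  refine hch 5 (by norm_num) f hinj ?_
  intro x y
  rcases hZ x with rfl|rfl|rfl|rfl|rfl <;> rcases hZ y with rfl|rfl|rfl|rfl|rfl <;>
    simp only [e0, e1, e2, e3, e4] <;>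
    first
      | exact iff_of_false (fun h => h.1 rfl) (by decide)
      | exact iff_of_true a01 (by decide)
      | exact iff_of_true a01.symm (by decide)
      | exact iff_of_true a12 (by decide)
      | exact iff_of_true a12.symm (by decide)
      | exact iff_of_true a23 (by decide)
      | exact iff_of_true a23.symm (by decide)
      | exact iff_of_true a34 (by decide)
      | exact iff_of_true a34.symm (by decide)
      | exact iff_of_true a40 (by decide)
      | exact iff_of_true a40.symm (by decide)
      | exact iff_of_false (fun h => na02 h) (by decide)
      | exact iff_of_false (fun h => na02 h.symm) (by decide)
      | exact iff_of_false (fun h => na03 h) (by decide)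
      | exact iff_of_false (fun h => na03 h.symm) (by decide)
      | exact iff_of_false (fun h => na13 h) (by decide)
      | exact iff_of_false (fun h => na13 h.symm) (by decide)
      | exact iff_of_false (fun h => na14 h) (by decide)
      | exact iff_of_false (fun h => na14 h.symm) (by decide)
      | exact iff_of_false (fun h => na24 h) (by decide)
      | exact iff_of_false (fun h => na24 h.symm) (by decide)

lemma cycle5D (hK : IsSimplicialComplex K) (hKne : Finset.univ ∉ K)
    (a b u : Fin m) (hab : a ≠ b) (hau : a ≠ u) (hbu : b ≠ u)
    (hD1 : ({a, b} : Finset (Fin m)) ∈ dualK K) (hu : ({u} : Finset (Fin m)) ∈ dualK K)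
    (hKa : ({a} : Finset (Fin m)) ∈ K) (hKb : ({b} : Finset (Fin m)) ∈ K)
    (hnK : ({a, b} : Finset (Fin m)) ∉ K)
    (hnau : ({a, u} : Finset (Fin m)) ∉ dualK K)
    (hnbu : ({b, u} : Finset (Fin m)) ∉ dualK K) :
    ¬ ChordalComplex (bier K) := by
  intro hch
  let f : ZMod 5 → Fin m ⊕ Fin m := ![.inl b, .inr a, .inr b, .inl a, .inr u]
  have e0 : f 0 = .inl b := rfl
  have e1 : f 1 = .inr a := rfl
  have e2 : f 2 = .inr b := rfl
  have e3 : f 3 = .inl a := rfl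
  have e4 : f 4 = .inr u := rfl
  have hZ : ∀ x : ZMod 5, x = 0 ∨ x = 1 ∨ x = 2 ∨ x = 3 ∨ x = 4 := by decide
  have hda : ({a} : Finset (Fin m)) ∈ dualK K := dual_down hK _ hD1 _ (by simp)
  have hdb : ({b} : Finset (Fin m)) ∈ dualK K := dual_down hK _ hD1 _ (by simp)
  have a01 : (skeletonGraph (bier K)).Adj (.inl b) (.inr a) :=
    ⟨by simp, (bier_lr hK b a).mpr ⟨hKb, hda, hab.symm⟩⟩
  have a12 : (skeletonGraph (bier K)).Adj (.inr a) (.inr b) :=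
    ⟨by simp [hab], (bier_rr hK a b).mpr hD1⟩
  have a23 : (skeletonGraph (bier K)).Adj (.inr b) (.inl a) :=
    ⟨by simp, (bier_rl hK a b).mpr ⟨hKa, hdb, hab⟩⟩
  have a34 : (skeletonGraph (bier K)).Adj (.inl a) (.inr u) :=
    ⟨by simp, (bier_lr hK a u).mpr ⟨hKa, hu, hau⟩⟩
  have a40 : (skeletonGraph (bier K)).Adj (.inr u) (.inl b) :=
    ⟨by simp, (bier_rl hK b u).mpr ⟨hKb, hu, hbu⟩⟩
  have na02 : ¬ (skeletonGraph (bier K)).Adj (.inl b) (.inr b) :=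
    fun h => ((bier_lr hK b b).mp h.2).2.2 rfl
  have na03 : ¬ (skeletonGraph (bier K)).Adj (.inl b) (.inl a) :=
    fun h => hnK (by have := (bier_ll hK hKne b a).mp h.2; rwa [Finset.pair_comm] at this)
  have na13 : ¬ (skeletonGraph (bier K)).Adj (.inr a) (.inl a) :=
    fun h => ((bier_rl hK a a).mp h.2).2.2 rfl
  have na14 : ¬ (skeletonGraph (bier K)).Adj (.inr a) (.inr u) :=
    fun h => hnau ((bier_rr hK a u).mp h.2)
  have na24 : ¬ (skeletonGraph (bier K)).Adj (.inr b) (.inr u) :=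
    fun h => hnbu ((bier_rr hK b u).mp h.2)
  have hinj : Function.Injective f := by
    intro x y hxy
    rcases hZ x with rfl|rfl|rfl|rfl|rfl <;> rcases hZ y with rfl|rfl|rfl|rfl|rfl <;>
      simp only [e0, e1, e2, e3, e4] at hxy <;> simp_all
  refine hch 5 (by norm_num) f hinj ?_
  intro x y
  rcases hZ x with rfl|rfl|rfl|rfl|rfl <;> rcases hZ y with rfl|rfl|rfl|rfl|rfl <;>
    simp only [e0, e1, e2, e3, e4] <;>
    first
      | exact iff_of_false (fun h => h.1 rfl) (by decide)
      | exact iff_of_true a01 (by decide)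
      | exact iff_of_true a01.symm (by decide)
      | exact iff_of_true a12 (by decide)
      | exact iff_of_true a12.symm (by decide)
      | exact iff_of_true a23 (by decide)
      | exact iff_of_true a23.symm (by decide)
      | exact iff_of_true a34 (by decide)
      | exact iff_of_true a34.symm (by decide)
      | exact iff_of_true a40 (by decide)
      | exact iff_of_true a40.symm (by decide)
      | exact iff_of_false (fun h => na02 h) (by decide)
      | exact iff_of_false (fun h => na02 h.symm) (by decide)
      | exact iff_of_false (fun h => na03 h) (by decide)
      | exact iff_of_false (fun h => na03 h.symm) (by decide)
      | exact iff_of_false (fun h => na13 h) (by decide)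
      | exact iff_of_false (fun h => na13 h.symm) (by decide)
      | exact iff_of_false (fun h => na14 h) (by decide)
      | exact iff_of_false (fun h => na14 h.symm) (by decide)
      | exact iff_of_false (fun h => na24 h) (by decide)
      | exact iff_of_false (fun h => na24 h.symm) (by decide)

end cyc

/-- for `m ≥ 4`, if the 1-skeleton of `Bier(K)` is chordal,
then `K` has no edges or `K^∨` has no edges. -/
theorem chordal_bier_no_edges {m : ℕ} (hm : 4 ≤ m) (K : Set (Finset (Fin m)))
    (hK : IsSimplicialComplex K) (hKne : Finset.univ ∉ K)
    (hch : ChordalComplex (bier K)) :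
    (∀ i j : Fin m, i ≠ j → ({i, j} : Finset (Fin m)) ∉ K) ∨
    (∀ i j : Fin m, i ≠ j → ({i, j} : Finset (Fin m)) ∉ dualK K) := by
  by_contra hcon
  push_neg at hcon
  obtain ⟨⟨i, j, hij, hKij⟩, ⟨a, b, hab, hDab⟩⟩ := hcon
  by_cases hcpE : ∃ p q : Fin m, p ≠ q ∧ ({p, q} : Finset (Fin m)) ∈ K ∧
      ({p, q} : Finset (Fin m)) ∈ dualK K
  · obtain ⟨p, q, hpq, h1, h2⟩ := hcpE
    exact cycle4 hK hKne p q hpq h1 h2 hch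
  push_neg at hcpE
  have hcp : ∀ p q : Fin m, p ≠ q → ({p, q} : Finset (Fin m)) ∈ K →
      ({p, q} : Finset (Fin m)) ∉ dualK K := fun p q h1 h2 => hcpE p q h1 h2
  have hnc : ∀ p q : Fin m, p ≠ q → ({p, q} : Finset (Fin m)) ∈ K →
      Finset.univ \ {p, q} ∈ K := by
    intro p q h1 h2
    have h3 := hcp p q h1 h2
    simpa [dualK, not_not] using h3
  have hC : Finset.univ \ {i, j} ∈ K := hnc i j hij hKij
  have hCcard : ∀ p q : Fin m, p ≠ q →
      (Finset.univ \ {p, q} : Finset (Fin m)).card = m - 2 := by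
    intro p q hpq
    rw [Finset.card_sdiff_of_subset (Finset.subset_univ _), Finset.card_univ, Fintype.card_fin,
      Finset.card_pair hpq]
  rcases Nat.lt_or_ge m 5 with hm4 | hm5
  · -- m = 4 case
    have hm4 : m = 4 := by omega
    have hflip : ∀ p q : Fin m, p ≠ q → Finset.univ \ {p, q} ∈ K →
        ({p, q} : Finset (Fin m)) ∈ K := by
      intro p q hpq hmem
      have hc2 : (Finset.univ \ {p, q} : Finset (Fin m)).card = 2 := by
        rw [hCcard p q hpq, hm4]
      obtain ⟨y, z, hyz, hE⟩ := Finset.card_eq_two.mp hc2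
      have hyzK : ({y, z} : Finset (Fin m)) ∈ K := hE ▸ hmem
      have h2 := hnc y z hyz hyzK
      rw [← hE, Finset.sdiff_sdiff_self_left, Finset.univ_inter] at h2
      exact h2
    have hsingK : ∀ x : Fin m, ({x} : Finset (Fin m)) ∈ K := by
      intro x
      by_cases hx : x = i ∨ x = j
      · refine hK.2 _ hKij _ ?_
        rcases hx with rfl | rfl <;> simp
      · push_neg at hx
        refine hK.2 _ hC _ ?_
        simp [Finset.singleton_subset_iff, Finset.mem_sdiff, hx.1, hx.2]
    have hsingD : ∀ x : Fin m, ({x} : Finset (Fin m)) ∈ dualK K := by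
      intro x
      by_contra hx
      have hT : Finset.univ \ {x} ∈ K := by simpa [dualK, not_not] using hx
      have hallp : ∀ p q : Fin m, p ≠ q → ({p, q} : Finset (Fin m)) ∈ K := by
        intro p q hpq
        by_cases hxpq : x = p ∨ x = q
        · refine hflip p q hpq (hK.2 _ hT _ ?_)
          intro w hw
          simp only [Finset.mem_sdiff, Finset.mem_univ, true_and, Finset.mem_singleton] at hw ⊢
          rintro rfl
          simp only [Finset.mem_insert, Finset.mem_singleton, not_or] at hw
          rcases hxpq with rfl | rfl
          · exact hw.1 rfl
          · exact hw.2 rfl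
        · push_neg at hxpq
          refine hK.2 _ hT _ ?_
          intro w hw
          simp only [Finset.mem_insert, Finset.mem_singleton] at hw
          simp only [Finset.mem_sdiff, Finset.mem_univ, true_and, Finset.mem_singleton]
          rcases hw with rfl | rfl
          · exact fun h => hxpq.1 h.symm
          · exact fun h => hxpq.2 h.symm
      exact hcp a b hab (hallp a b hab) hDab
    have hnotK : ∀ p q : Fin m, p ≠ q → ({p, q} : Finset (Fin m)) ∈ dualK K →
        ({p, q} : Finset (Fin m)) ∉ K := by
      intro p q hpq hd hk
      exact hcp p q hpq hk hd
    have core : ∀ x y z : Fin m, x ≠ y → x ≠ z → y ≠ z →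
        ({x, y} : Finset (Fin m)) ∈ K → ({x, z} : Finset (Fin m)) ∈ dualK K → False := by
      intro x y z hxy hxz hyz hKxy hDxz
      by_cases hyzK : ({y, z} : Finset (Fin m)) ∈ K
      · refine cycle5D hK hKne x z y hxz hxy (Ne.symm hyz) hDxz (hsingD y)
          (hsingK x) (hsingK z) (hnotK x z hxz hDxz) (hcp x y hxy hKxy) ?_ hch
        intro hd
        refine hcp y z hyz hyzK ?_
        rwa [Finset.pair_comm] at hd
      · exact cycle5K hK hKne x y z hxy hxz hyz hKxy (hsingK z) (hsingD x) (hsingD y)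
          (hcp x y hxy hKxy) (hnotK x z hxz hDxz) hyzK hch
    by_cases h1 : a = i
    · subst h1
      have hjb : j ≠ b := by rintro rfl; exact hcp a j hij hKij hDab
      exact core a j b hij hab hjb hKij hDab
    by_cases h2 : a = j
    · subst h2
      have hib : i ≠ b := by
        rintro rfl
        refine hcp i a hij hKij ?_
        rwa [Finset.pair_comm] at hDab
      exact core a i b (Ne.symm hij) hab hib (by rwa [Finset.pair_comm] at hKij) hDab
    by_cases h3 : b = i
    · subst h3
      exact core b j a hij (fun h => h1 h.symm) (fun h => h2 h.symm) hKij
        (by rwa [Finset.pair_comm] at hDab)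
    by_cases h4 : b = j
    · subst h4
      exact core b i a (Ne.symm hij) (fun h => h2 h.symm) (fun h => h1 h.symm)
        (by rwa [Finset.pair_comm] at hKij) (by rwa [Finset.pair_comm] at hDab)
    · -- a, b disjoint from {i, j}
      have hsub : ({a, b} : Finset (Fin m)) ⊆ Finset.univ \ {i, j} := by
        intro w hw
        simp only [Finset.mem_insert, Finset.mem_singleton] at hw
        simp only [Finset.mem_sdiff, Finset.mem_univ, true_and, Finset.mem_insert,
          Finset.mem_singleton, not_or]
        rcases hw with rfl | rfl
        · exact ⟨h1, h2⟩
        · exact ⟨h3, h4⟩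
      have heq : ({a, b} : Finset (Fin m)) = Finset.univ \ {i, j} :=
        Finset.eq_of_subset_of_card_le hsub
          (by rw [hCcard i j hij, Finset.card_pair hab, hm4])
      exact hcp a b hab (heq ▸ hC) hDab
  · -- m ≥ 5 case: all pairs lie in K, contradiction
    have hone : ∀ p q : Fin m, (p = i ∨ p = j) → q ≠ i → q ≠ j →
        ({p, q} : Finset (Fin m)) ∈ K := by
      intro p q hp hqi hqj
      have hcard : 1 < ((Finset.univ \ {i, j} : Finset (Fin m)).erase q).card := by
        by_cases hq : q ∈ (Finset.univ \ {i, j} : Finset (Fin m))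
        · rw [Finset.card_erase_of_mem hq, hCcard i j hij]; omega
        · rw [Finset.erase_eq_of_notMem hq, hCcard i j hij]; omega
      obtain ⟨y, hy, z, hz, hyz⟩ := Finset.one_lt_card.mp hcard
      have hyC := Finset.mem_of_mem_erase hy
      have hzC := Finset.mem_of_mem_erase hz
      have hyzK : ({y, z} : Finset (Fin m)) ∈ K := by
        refine hK.2 _ hC _ ?_
        intro w hw
        simp only [Finset.mem_insert, Finset.mem_singleton] at hw
        rcases hw with rfl | rfl
        · exact hyC
        · exact hzC
      have h2 := hnc y z hyz hyzK
      refine hK.2 _ h2 _ ?_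
      intro w hw
      simp only [Finset.mem_insert, Finset.mem_singleton] at hw
      simp only [Finset.mem_sdiff, Finset.mem_univ, true_and, Finset.mem_insert,
        Finset.mem_singleton, not_or]
      have hyij : y ∉ ({i, j} : Finset (Fin m)) := (Finset.mem_sdiff.mp hyC).2
      have hzij : z ∉ ({i, j} : Finset (Fin m)) := (Finset.mem_sdiff.mp hzC).2
      simp only [Finset.mem_insert, Finset.mem_singleton, not_or] at hyij hzij
      rcases hw with rfl | rfl
      · constructor
        · rintro rfl; rcases hp with rfl | rfl
          · exact hyij.1 rfl
          · exact hyij.2 rfl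
        · rintro rfl; rcases hp with rfl | rfl
          · exact hzij.1 rfl
          · exact hzij.2 rfl
      · exact ⟨(Finset.ne_of_mem_erase hy).symm, (Finset.ne_of_mem_erase hz).symm⟩
    have hallp : ∀ p q : Fin m, p ≠ q → ({p, q} : Finset (Fin m)) ∈ K := by
      intro p q hpq
      by_cases hp : p = i ∨ p = j
      · by_cases hq : q = i ∨ q = j
        · rcases hp with rfl | rfl <;> rcases hq with rfl | rfl
          · exact absurd rfl hpq
          · exact hKij
          · rw [Finset.pair_comm]; exact hKij
          · exact absurd rfl hpq
        · push_neg at hq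
          exact hone p q hp hq.1 hq.2
      · push_neg at hp
        by_cases hq : q = i ∨ q = j
        · rw [Finset.pair_comm]
          exact hone q p hq hp.1 hp.2
        · push_neg at hq
          refine hK.2 _ hC _ ?_
          intro w hw
          simp only [Finset.mem_insert, Finset.mem_singleton] at hw
          simp only [Finset.mem_sdiff, Finset.mem_univ, true_and, Finset.mem_insert,
            Finset.mem_singleton, not_or]
          rcases hw with rfl | rfl
          · exact ⟨hp.1, hp.2⟩
          · exact ⟨hq.1, hq.2⟩
    exact hcp a b hab (hallp a b hab) hDab
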